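/- For every n-simplex σ (n ≥ 1) in a Euclidean space there exists a vertex v_i such that h(v_i, σ) ≤ R(σ)/n, where h(v_i, σ) is the signed distance from the circumcenter c(σ) to the hyperplane affineSpan(F_i) of the facet opposite v_i, taken positive when c(σ) and v_i lie on the same side of that hyperplane. -/

import Mathlib

open EuclideanGeometry RealInnerProductSpace

variable {E : Type*} [NormedAddCommGroup E] [InnerProductSpace ℝ E] [FiniteDimensional ℝ E]

/-- The facet of an `(n+1)`-simplex opposite vertex `i`. -/
noncomputable def Affine.Simplex.facetOpp {n : ℕ} (σ : Affine.Simplex ℝ E (n + 1))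
    (i : Fin (n + 2)) : Affine.Simplex ℝ E n :=
  σ.face (fs := {i}ᶜ)
    (by rw [Finset.card_compl, Finset.card_singleton, Fintype.card_fin]; rfl)

/-- A simplex is well-centered if its circumcenter is a positive affine
combination of its vertices, i.e. lies in the interior of the simplex. -/
def Affine.Simplex.WellCentered {n : ℕ} (σ : Affine.Simplex ℝ E n) : Prop :=
  ∃ w : Fin (n + 1) → ℝ, (∀ j, 0 < w j) ∧ (∑ j, w j = 1) ∧
    σ.circumcenter = Finset.univ.affineCombination ℝ σ.points w

/-- The signed distance from the circumcenter of `σ` to the hyperplane spanned by the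
facet opposite vertex `i`, positive when the circumcenter is on the same side as vertex `i`. -/
noncomputable def Affine.Simplex.signedDist {n : ℕ} (σ : Affine.Simplex ℝ E (n + 1))
    (i : Fin (n + 2)) : ℝ :=
  ⟪σ.circumcenter - ((σ.facetOpp i).circumcenter : E),
      σ.points i - (((σ.facetOpp i).orthogonalProjectionSpan (σ.points i) : E))⟫ /
    ‖σ.points i - (((σ.facetOpp i).orthogonalProjectionSpan (σ.points i) : E))‖

namespace Affine.Simplex

variable {n : ℕ} (σ : Affine.Simplex ℝ E (n + 1)) (i : Fin (n + 2))

lemma range_facetOpp_points :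
    Set.range (σ.facetOpp i).points = σ.points '' (Set.univ \ {i}) := by
  rw [facetOpp, range_face_points]
  congr 1
  simp [Set.compl_eq_univ_diff]

lemma point_not_mem_facetOpp_span :
    σ.points i ∉ affineSpan ℝ (Set.range (σ.facetOpp i).points) := by
  rw [range_facetOpp_points]
  exact σ.independent.notMem_affineSpan_sdiff i Set.univ

lemma point_mem_facetOpp_span {j : Fin (n + 2)} (hj : j ≠ i) :
    σ.points j ∈ affineSpan ℝ (Set.range (σ.facetOpp i).points) := by
  apply mem_affineSpan
  rw [range_facetOpp_points]
  exact ⟨j, ⟨trivial, hj⟩, rfl⟩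

lemma facetOpp_nvec_ne_zero :
    σ.points i - (((σ.facetOpp i).orthogonalProjectionSpan (σ.points i) : E)) ≠ 0 := by
  intro h
  apply σ.point_not_mem_facetOpp_span i
  rw [sub_eq_zero.mp h]
  exact ((σ.facetOpp i).orthogonalProjectionSpan (σ.points i)).2

lemma facetOpp_nvec_mem_orthogonal :
    σ.points i - (((σ.facetOpp i).orthogonalProjectionSpan (σ.points i) : E)) ∈
      (affineSpan ℝ (Set.range (σ.facetOpp i).points)).directionᗮ := by
  rw [← vsub_eq_sub]
  exact vsub_orthogonalProjection_mem_direction_orthogonal _ _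

lemma inner_nvec_of_mem {x y : E}
    (hx : x ∈ affineSpan ℝ (Set.range (σ.facetOpp i).points))
    (hy : y ∈ affineSpan ℝ (Set.range (σ.facetOpp i).points)) :
    ⟪x - y, σ.points i - (((σ.facetOpp i).orthogonalProjectionSpan (σ.points i) : E))⟫ = 0 := by
  refine Submodule.inner_right_of_mem_orthogonal ?_ (σ.facetOpp_nvec_mem_orthogonal i)
  rw [← vsub_eq_sub]
  exact AffineSubspace.vsub_mem_direction hx hy

/-- The circumcenter of the facet is the orthogonal projection of the circumcenter. -/
lemma facetOpp_circumcenter_eq_proj :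
    ((σ.facetOpp i).circumcenter : E) =
      ((σ.facetOpp i).orthogonalProjectionSpan σ.circumcenter : E) :=
  (σ.orthogonalProjection_circumcenter
    (fs := {i}ᶜ)
    (by rw [Finset.card_compl, Finset.card_singleton, Fintype.card_fin]; rfl)).symm

/-- The signed distance is the `i`-th barycentric coordinate of the circumcenter
times the distance from vertex `i` to the opposite facet's hyperplane. -/
lemma signedDist_eq_weight_mul {w : Fin (n + 2) → ℝ} (hw : ∑ j, w j = 1)
    (hc : σ.circumcenter = Finset.univ.affineCombination ℝ σ.points w) :
    σ.signedDist i =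
      w i * ‖σ.points i - (((σ.facetOpp i).orthogonalProjectionSpan (σ.points i) : E))‖ := by
  set nv : E := σ.points i - (((σ.facetOpp i).orthogonalProjectionSpan (σ.points i) : E))
    with hnv
  have hnv0 : nv ≠ 0 := σ.facetOpp_nvec_ne_zero i
  have hq : ((σ.facetOpp i).circumcenter : E) ∈
      affineSpan ℝ (Set.range (σ.facetOpp i).points) :=
    (σ.facetOpp i).circumcenter_mem_affineSpan
  have hnum : ⟪σ.circumcenter - ((σ.facetOpp i).circumcenter : E), nv⟫ = w i * ‖nv‖ ^ 2 := by
    set q : E := ((σ.facetOpp i).circumcenter : E) with hqdef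
    have hcomb : σ.circumcenter - q = ∑ j, w j • (σ.points j - q) := by
      rw [hc, Finset.affineCombination_eq_weightedVSubOfPoint_vadd_of_sum_eq_one _ w _ hw q]
      simp [Finset.weightedVSubOfPoint_apply, vsub_eq_sub, vadd_eq_add]
    rw [hcomb, sum_inner]
    rw [Finset.sum_eq_single i]
    · have : σ.points i - q = nv + (((σ.facetOpp i).orthogonalProjectionSpan (σ.points i) : E) - q) := by
        rw [hnv]; abel
      rw [real_inner_smul_left, this, inner_add_left,
        σ.inner_nvec_of_mem i ((σ.facetOpp i).orthogonalProjectionSpan (σ.points i)).2 hq,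
        real_inner_self_eq_norm_sq]
      ring
    · intro j _ hj
      rw [real_inner_smul_left, σ.inner_nvec_of_mem i (σ.point_mem_facetOpp_span i hj) hq,
        mul_zero]
    · intro h
      exact absurd (Finset.mem_univ i) h
  rw [signedDist, ← hnv, hnum]
  rw [div_eq_iff (norm_ne_zero_iff.mpr hnv0)]
  ring

/-- Distance from vertex `i` to the opposite facet hyperplane is at most `R + h_i`. -/
lemma norm_nvec_le :
    ‖σ.points i - (((σ.facetOpp i).orthogonalProjectionSpan (σ.points i) : E))‖ ≤
      σ.circumradius + σ.signedDist i := by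
  set nv : E := σ.points i - (((σ.facetOpp i).orthogonalProjectionSpan (σ.points i) : E))
    with hnv
  have hnv0 : nv ≠ 0 := σ.facetOpp_nvec_ne_zero i
  have hnorm : (0 : ℝ) < ‖nv‖ := norm_pos_iff.mpr hnv0
  have hq : ((σ.facetOpp i).circumcenter : E) ∈
      affineSpan ℝ (Set.range (σ.facetOpp i).points) :=
    (σ.facetOpp i).circumcenter_mem_affineSpan
  set q : E := ((σ.facetOpp i).circumcenter : E) with hqdef
  have hsplit : ‖nv‖ ^ 2 = ⟪σ.points i - σ.circumcenter, nv⟫ + ⟪σ.circumcenter - q, nv⟫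
      + ⟪q - (((σ.facetOpp i).orthogonalProjectionSpan (σ.points i) : E)), nv⟫ := by
    rw [← inner_add_left, ← inner_add_left]
    have : σ.points i - σ.circumcenter + (σ.circumcenter - q)
        + (q - (((σ.facetOpp i).orthogonalProjectionSpan (σ.points i) : E))) = nv := by
      rw [hnv]; abel
    rw [this, real_inner_self_eq_norm_sq]
  have h3 : ⟪q - (((σ.facetOpp i).orthogonalProjectionSpan (σ.points i) : E)), nv⟫ = 0 :=
    σ.inner_nvec_of_mem i hq ((σ.facetOpp i).orthogonalProjectionSpan (σ.points i)).2
  have h2 : ⟪σ.circumcenter - q, nv⟫ = σ.signedDist i * ‖nv‖ := by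
    rw [signedDist, ← hnv, ← hqdef, div_mul_cancel₀]
    exact norm_ne_zero_iff.mpr hnv0
  have h1 : ⟪σ.points i - σ.circumcenter, nv⟫ ≤ σ.circumradius * ‖nv‖ := by
    calc ⟪σ.points i - σ.circumcenter, nv⟫ ≤ ‖σ.points i - σ.circumcenter‖ * ‖nv‖ :=
          real_inner_le_norm _ _
      _ = σ.circumradius * ‖nv‖ := by
          rw [← dist_eq_norm, σ.dist_circumcenter_eq_circumradius i]
  have : ‖nv‖ ^ 2 ≤ (σ.circumradius + σ.signedDist i) * ‖nv‖ := by
    rw [hsplit, h3, h2, add_zero]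
    nlinarith [h1]
  nlinarith [this, hnorm]

end Affine.Simplex

/-- For every `(n+1)`-simplex there is a vertex whose signed distance
from the circumcenter to the opposite facet hyperplane is at most `R/(n+1)`. -/
theorem exists_signedDist_le_circumradius_div {n : ℕ}
    (σ : Affine.Simplex ℝ E (n + 1)) :
    ∃ i : Fin (n + 2), σ.signedDist i ≤ σ.circumradius / (n + 1) := by
  obtain ⟨w, hw, hc⟩ := eq_affineCombination_of_mem_affineSpan_of_fintype
    σ.circumcenter_mem_affineSpan
  -- pick a vertex with small weight
  have hsum : ∑ j : Fin (n + 2), w j ≤ ∑ _j : Fin (n + 2), (1 : ℝ) / (n + 2) := by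
    rw [hw]
    apply le_of_eq
    rw [Finset.sum_const, Finset.card_univ, Fintype.card_fin, nsmul_eq_mul]
    push_cast
    rw [mul_one_div, div_self (by positivity : ((n : ℝ) + 2) ≠ 0)]
  obtain ⟨i, _, hi⟩ := Finset.exists_le_of_sum_le (Finset.univ_nonempty) hsum
  refine ⟨i, ?_⟩
  have hR : (0 : ℝ) ≤ σ.circumradius := σ.circumradius_nonneg
  have hNpos : (0 : ℝ) < (n : ℝ) + 1 := by positivity
  by_cases hneg : σ.signedDist i ≤ 0
  · exact hneg.trans (by positivity)
  push_neg at hneg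
  set d : ℝ := ‖σ.points i - (((σ.facetOpp i).orthogonalProjectionSpan (σ.points i) : E))‖
  have hd : σ.signedDist i = w i * d := σ.signedDist_eq_weight_mul i hw hc
  have hdpos : 0 < d := norm_pos_iff.mpr (σ.facetOpp_nvec_ne_zero i)
  have hwpos : 0 < w i := by
    by_contra h
    push_neg at h
    have : σ.signedDist i ≤ 0 := by
      rw [hd]
      exact mul_nonpos_of_nonpos_of_nonneg h hdpos.le
    linarith
  have hdle : d ≤ σ.circumradius + σ.signedDist i := σ.norm_nvec_le i
  -- h = w d ≤ w (R + h), with w ≤ 1/(n+2)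
  have key : σ.signedDist i * (1 - w i) ≤ w i * σ.circumradius := by
    have := mul_le_mul_of_nonneg_left hdle hwpos.le
    nlinarith [hd]
  have hi2 : w i * ((n : ℝ) + 2) ≤ 1 := by
    rw [← le_div_iff₀ (by positivity : (0:ℝ) < (n:ℝ) + 2)]
    exact hi
  rw [le_div_iff₀ hNpos]
  have e1 : σ.signedDist i * (1 - w i) * ((n:ℝ)+2) ≤ w i * σ.circumradius * ((n:ℝ)+2) :=
    mul_le_mul_of_nonneg_right key (by positivity)
  have e2 : w i * ((n:ℝ)+2) * σ.circumradius ≤ 1 * σ.circumradius :=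
    mul_le_mul_of_nonneg_right hi2 hR
  have e3 : σ.signedDist i * (w i * ((n:ℝ)+2)) ≤ σ.signedDist i * 1 :=
    mul_le_mul_of_nonneg_left hi2 hneg.le
  nlinarith [e1, e2, e3]
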